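/- Let d ≥ 1, n ≥ 1, and let Λ be a diagonal d×d complex matrix whose (0,0) entry is λ₀. Then ⟨e₀| tr_{2…n}[Π_n Λ^{⊗n} Π_n] |e₀⟩ = (1/n)·Σ_{j=1}^{n} λ₀^j · p_{n−j}, where p_k := tr[Π_k Λ^{⊗k}] for k ≥ 1 and p₀ := 1, and e₀ is the first standard basis vector of ℂ^d. (Recursion for the fidelity numerator of the symmetric-projection protocol, Lemma S1, part 2.) -/

import Mathlib

open Matrix

/-- Permutation matrix on `(ℂ^d)^{⊗n}` permuting tensor factors. -/
noncomputable def permMat (n d : ℕ) (σ : Equiv.Perm (Fin n)) :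
    Matrix (Fin n → Fin d) (Fin n → Fin d) ℂ :=
  Matrix.of fun v w => if v = w ∘ σ then 1 else 0

/-- Projector onto the symmetric subspace of `(ℂ^d)^{⊗n}`. -/
noncomputable def symProj (n d : ℕ) :
    Matrix (Fin n → Fin d) (Fin n → Fin d) ℂ :=
  ((n.factorial : ℂ)⁻¹) • ∑ σ : Equiv.Perm (Fin n), permMat n d σ

/-- `n`-fold tensor (Kronecker) power of a `d×d` matrix. -/
noncomputable def tpow {d : ℕ} (A : Matrix (Fin d) (Fin d) ℂ) (n : ℕ) :
    Matrix (Fin n → Fin d) (Fin n → Fin d) ℂ :=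
  Matrix.of fun v w => ∏ i, A (v i) (w i)

/-- Partial trace over all tensor factors except the first. -/
noncomputable def ptrRest {n d : ℕ}
    (M : Matrix (Fin (n + 1) → Fin d) (Fin (n + 1) → Fin d) ℂ) :
    Matrix (Fin d) (Fin d) ℂ :=
  Matrix.of fun i j => ∑ t : Fin n → Fin d, M (Fin.cons i t) (Fin.cons j t)

namespace Stmt4Aux
variable {n d : ℕ} (lam : Fin d → ℂ)

lemma tpow_diag (a b : Fin n → Fin d) :
    tpow (Matrix.diagonal lam) n a b = if a = b then ∏ j, lam (a j) else 0 := by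
  rw [tpow, Matrix.of_apply]
  split
  · next h =>
      subst h
      exact Finset.prod_congr rfl fun j _ => by simp [Matrix.diagonal]
  · next h =>
      obtain ⟨j, hj⟩ := Function.ne_iff.mp h
      exact Finset.prod_eq_zero (Finset.mem_univ j) (by simp [Matrix.diagonal_apply_ne _ hj])

lemma comp_eq_iff (v a : Fin n → Fin d) (σ : Equiv.Perm (Fin n)) :
    v = a ∘ σ ↔ a = v ∘ ⇑σ⁻¹ := by
  constructor
  · rintro rfl; funext j; simp
  · rintro rfl; funext j; simp

lemma symProj_mul_apply (X : Matrix (Fin n → Fin d) (Fin n → Fin d) ℂ)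
    (v b : Fin n → Fin d) :
    (symProj n d * X) v b
      = (n.factorial : ℂ)⁻¹ * ∑ σ : Equiv.Perm (Fin n), X (v ∘ ⇑σ⁻¹) b := by
  simp only [symProj, Matrix.mul_apply, Matrix.smul_apply, Matrix.sum_apply, permMat,
    Matrix.of_apply, smul_eq_mul, Finset.sum_mul, Finset.mul_sum]
  rw [Finset.sum_comm]
  refine Finset.sum_congr rfl fun σ _ => ?_
  rw [Finset.sum_eq_single (v ∘ ⇑σ⁻¹)]
  · rw [if_pos ((comp_eq_iff v (v ∘ ⇑σ⁻¹) σ).mpr rfl), mul_one]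
  · intro a _ ha
    rw [if_neg fun h => ha ((comp_eq_iff v a σ).mp h), mul_zero, zero_mul]
  · simp

lemma mul_symProj_apply (X : Matrix (Fin n → Fin d) (Fin n → Fin d) ℂ)
    (a v : Fin n → Fin d) :
    (X * symProj n d) a v
      = (n.factorial : ℂ)⁻¹ * ∑ τ : Equiv.Perm (Fin n), X a (v ∘ ⇑τ) := by
  simp only [symProj, Matrix.mul_apply, Matrix.smul_apply, Matrix.sum_apply, permMat,
    Matrix.of_apply, smul_eq_mul, Finset.mul_sum]
  rw [Finset.sum_comm]
  refine Finset.sum_congr rfl fun τ _ => ?_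
  rw [Finset.sum_eq_single (v ∘ ⇑τ)]
  · rw [if_pos rfl, mul_one, mul_comm]
  · intro b _ hb
    rw [if_neg hb, mul_zero, mul_zero]
  · simp


def cnt (v : Fin n → Fin d) (i : Fin d) : ℕ :=
  (Finset.univ.filter fun j => v j = i).card
def S (v : Fin n → Fin d) : ℕ := ∏ i, (cnt v i).factorial

/-- fiber of Sigma.fst -/
def fstFiber {β : Fin d → Type*} (i : Fin d) : {s : Sigma β // s.1 = i} ≃ β i where
  toFun s := s.2 ▸ s.1.2
  invFun b := ⟨⟨i, b⟩, rfl⟩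
  left_inv := by rintro ⟨⟨i', b⟩, rfl⟩; rfl
  right_inv b := rfl

lemma exists_cnt_eq (c : Fin d → ℕ) (h : ∑ i, c i = n) :
    ∃ v : Fin n → Fin d, cnt v = c := by
  classical
  have e : (Σ i : Fin d, Fin (c i)) ≃ Fin n :=
    Fintype.equivFinOfCardEq (by simp [h])
  refine ⟨fun j => (e.symm j).1, ?_⟩
  funext i
  rw [cnt, ← Fintype.card_subtype]
  rw [Fintype.card_congr ((e.symm.subtypeEquiv (q := fun s => s.1 = i)
      (fun j => Iff.rfl)).trans (fstFiber i))]
  simp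

lemma card_stab' (v : Fin n → Fin d) :
    (Finset.univ.filter fun σ : Equiv.Perm (Fin n) => v ∘ σ = v).card = S v := by
  classical
  rw [← Fintype.card_subtype, DomMulAct.stabilizer_card]
  exact Finset.prod_congr rfl fun i _ => by rw [Fintype.card_subtype]; rfl

lemma cnt_comp' (v : Fin n → Fin d) (σ : Equiv.Perm (Fin n)) :
    cnt (v ∘ σ) = cnt v := by
  funext i; exact Finset.card_equiv σ (by simp)

lemma S_comp' (v : Fin n → Fin d) (σ : Equiv.Perm (Fin n)) : S (v ∘ σ) = S v := by
  simp [S, cnt_comp']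

lemma card_comp_eq (v w : Fin n → Fin d) (h : ∃ σ₁ : Equiv.Perm (Fin n), v ∘ σ₁ = w) :
    (Finset.univ.filter fun σ : Equiv.Perm (Fin n) => v ∘ σ = w).card = S w := by
  classical
  obtain ⟨σ₁, hσ₁⟩ := h
  rw [← card_stab' w]
  refine (Finset.card_equiv (Equiv.mulLeft σ₁) fun ρ => ?_).symm
  simp only [Finset.mem_filter, Finset.mem_univ, true_and, Equiv.coe_mulLeft]
  constructor
  · intro hr
    funext j
    have h1 := congrFun hσ₁ (ρ j)
    have h2 := congrFun hr j
    simp only [Function.comp_apply, Equiv.Perm.mul_apply] at h1 h2 ⊢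
    exact h1.trans h2
  · intro hr
    funext j
    have h1 := congrFun hσ₁ (ρ j)
    have h2 := congrFun hr j
    simp only [Function.comp_apply, Equiv.Perm.mul_apply] at h1 h2 ⊢
    exact h1.symm.trans h2

lemma exists_comp_of_cnt_eq (v w : Fin n → Fin d) (h : cnt v = cnt w) :
    ∃ σ : Equiv.Perm (Fin n), v ∘ σ = w := by
  classical
  have e : ∀ i, {j // w j = i} ≃ {j // v j = i} := fun i =>
    Fintype.equivOfCardEq (by
      rw [Fintype.card_subtype, Fintype.card_subtype]
      exact (congrFun h i).symm)
  refine ⟨(Equiv.sigmaFiberEquiv w).symm.trans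
    ((Equiv.sigmaCongrRight e).trans (Equiv.sigmaFiberEquiv v)), ?_⟩
  funext j
  simp only [Function.comp_apply, Equiv.trans_apply, Equiv.sigmaFiberEquiv,
    Equiv.coe_fn_symm_mk, Equiv.sigmaCongrRight_apply, Sigma.map, Equiv.coe_fn_mk]
  exact ((e (w j)) ⟨j, rfl⟩).2


lemma sum_cnt' (v : Fin n → Fin d) : ∑ i, cnt v i = n := by
  classical
  have := Finset.card_eq_sum_card_fiberwise (f := v) (s := Finset.univ)
    (t := Finset.univ) (by simp)
  simpa [cnt] using this.symm

lemma sum_S_fiber (c : Fin d → ℕ) (h : ∑ i, c i = n) :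
    ∑ w ∈ Finset.univ.filter (fun w : Fin n → Fin d => cnt w = c), S w
      = n.factorial := by
  classical
  obtain ⟨v₀, hv₀⟩ := exists_cnt_eq c h
  have hcard : (Finset.univ : Finset (Equiv.Perm (Fin n))).card = n.factorial := by
    simp [Finset.card_univ, Fintype.card_perm]
  rw [← hcard, Finset.card_eq_sum_card_fiberwise
      (f := fun σ : Equiv.Perm (Fin n) => v₀ ∘ σ)
      (t := Finset.univ.filter fun w : Fin n → Fin d => cnt w = c)
      (fun σ _ => by simp [cnt_comp', hv₀])]
  refine Finset.sum_congr rfl fun w hw => ?_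
  rw [Finset.mem_filter] at hw
  exact card_comp_eq v₀ w (exists_comp_of_cnt_eq v₀ w (hv₀.trans hw.2.symm)) ▸ rfl

lemma key (g : (Fin d → ℕ) → ℂ) :
    ∑ v : Fin n → Fin d, (S v : ℂ) * g (cnt v)
      = (n.factorial : ℂ) * ∑ c ∈ Finset.Nat.antidiagonalTuple d n, g c := by
  classical
  rw [← Finset.sum_fiberwise_of_maps_to (g := fun v : Fin n → Fin d => cnt v)
      (fun v _ => Finset.Nat.mem_antidiagonalTuple.mpr (sum_cnt' v)),
    Finset.mul_sum]
  refine Finset.sum_congr rfl fun c hc => ?_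
  have : ∀ v ∈ Finset.univ.filter (fun v : Fin n → Fin d => cnt v = c),
      (S v : ℂ) * g (cnt v) = g c * (S v : ℕ) := by
    intro v hv
    rw [Finset.mem_filter] at hv
    rw [hv.2, mul_comm]
  rw [Finset.sum_congr rfl this, ← Finset.mul_sum, ← Nat.cast_sum,
    sum_S_fiber c (Finset.Nat.mem_antidiagonalTuple.mp hc), mul_comm]

lemma prod_lam (v : Fin n → Fin d) :
    ∏ j, lam (v j) = ∏ i, lam i ^ cnt v i := by
  classical
  rw [← Finset.prod_fiberwise_of_maps_to (g := v) (fun j _ => Finset.mem_univ (v j))]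
  refine Finset.prod_congr rfl fun i _ => ?_
  rw [cnt, ← Finset.prod_const]
  exact Finset.prod_congr rfl fun j hj => by rw [(Finset.mem_filter.mp hj).2]

/-- number of σ with v∘σ = w, as a complex sum -/
lemma sum_comp_eq (v w : Fin n → Fin d) (h : ∃ σ₁ : Equiv.Perm (Fin n), v ∘ σ₁ = w) :
    ∑ σ : Equiv.Perm (Fin n), (if v ∘ ⇑σ = w then (1:ℂ) else 0) = (S w : ℂ) := by
  classical
  rw [Finset.sum_boole, ← card_comp_eq v w h]

lemma entry (v : Fin n → Fin d) :
    (symProj n d * tpow (Matrix.diagonal lam) n * symProj n d) v v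
      = (n.factorial : ℂ)⁻¹ * ((S v : ℂ) * ∏ j, lam (v j)) := by
  classical
  rw [mul_symProj_apply]
  have step : ∀ τ : Equiv.Perm (Fin n),
      (symProj n d * tpow (Matrix.diagonal lam) n) v (v ∘ ⇑τ)
        = (n.factorial : ℂ)⁻¹ * ((∑ σ : Equiv.Perm (Fin n),
            (if v ∘ ⇑σ⁻¹ = v ∘ ⇑τ then (1:ℂ) else 0)) * ∏ j, lam (v j)) := by
    intro τ
    rw [symProj_mul_apply, Finset.sum_mul]
    refine congrArg _ (Finset.sum_congr rfl fun σ _ => ?_)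
    rw [tpow_diag]
    split
    · rw [one_mul]
      simpa using Equiv.prod_comp σ⁻¹ fun j => lam (v j)
    · rw [zero_mul]
  have count : ∀ τ : Equiv.Perm (Fin n),
      (∑ σ : Equiv.Perm (Fin n), (if v ∘ ⇑σ⁻¹ = v ∘ ⇑τ then (1:ℂ) else 0))
        = (S v : ℂ) := by
    intro τ
    rw [← Equiv.sum_comp (Equiv.inv (Equiv.Perm (Fin n)))
        (fun σ => if v ∘ ⇑σ⁻¹ = v ∘ ⇑τ then (1:ℂ) else 0)]
    simp only [Equiv.inv_apply, inv_inv]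
    rw [sum_comp_eq v (v ∘ ⇑τ) ⟨τ, rfl⟩, S_comp']
  rw [Finset.sum_congr rfl fun τ _ => (step τ).trans (by rw [count τ])]
  rw [Finset.sum_const, Finset.card_univ, Fintype.card_perm, Fintype.card_fin]
  have hf : (n.factorial : ℂ) ≠ 0 := by exact_mod_cast Nat.factorial_ne_zero n
  rw [nsmul_eq_mul]
  field_simp


lemma diag_entry (v : Fin n → Fin d) :
    (symProj n d * tpow (Matrix.diagonal lam) n) v v
      = (n.factorial : ℂ)⁻¹ * ((S v : ℂ) * ∏ j, lam (v j)) := by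
  classical
  rw [symProj_mul_apply]
  congr 1
  have step : ∀ σ : Equiv.Perm (Fin n),
      tpow (Matrix.diagonal lam) n (v ∘ ⇑σ⁻¹) v
        = (if v ∘ ⇑σ⁻¹ = v then (1:ℂ) else 0) * ∏ j, lam (v j) := fun σ => by
    rw [tpow_diag]
    split
    · rw [one_mul]
      simpa using Equiv.prod_comp σ⁻¹ fun j => lam (v j)
    · rw [zero_mul]
  rw [Finset.sum_congr rfl fun σ _ => step σ, ← Finset.sum_mul]
  congr 1
  rw [← Equiv.sum_comp (Equiv.inv (Equiv.Perm (Fin n)))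
      (fun σ => if v ∘ ⇑σ⁻¹ = v then (1:ℂ) else 0)]
  simp only [Equiv.inv_apply, inv_inv]
  exact sum_comp_eq v v ⟨1, by simp⟩

lemma trace_eq :
    (symProj n d * tpow (Matrix.diagonal lam) n).trace
      = ∑ c ∈ Finset.Nat.antidiagonalTuple d n, ∏ i, lam i ^ c i := by
  classical
  rw [Matrix.trace]
  simp only [Matrix.diag_apply]
  rw [Finset.sum_congr rfl fun v _ => (diag_entry lam v).trans
      (by rw [prod_lam lam v]), ← Finset.mul_sum]
  rw [key (fun c => ∏ i, lam i ^ c i), ← mul_assoc,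
    inv_mul_cancel₀ (by exact_mod_cast Nat.factorial_ne_zero n : (n.factorial:ℂ) ≠ 0),
    one_mul]

lemma sum_update_aux {d : ℕ} (c : Fin d → ℕ) (z : Fin d) (x : ℕ) :
    ∑ i, Function.update c z x i + c z = ∑ i, c i + x := by
  rw [Finset.sum_update_of_mem (Finset.mem_univ z), ← Finset.erase_eq,
    ← Finset.add_sum_erase _ c (Finset.mem_univ z)]
  ring

lemma final_bij {d : ℕ} (n : ℕ) (lam : Fin d → ℂ) (z : Fin d) :
    ∑ j ∈ Finset.Icc 1 n, lam z ^ j *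
        ∑ c' ∈ Finset.Nat.antidiagonalTuple d (n - j), ∏ i, lam i ^ c' i
      = ∑ c ∈ Finset.Nat.antidiagonalTuple d n, (c z : ℂ) * ∏ i, lam i ^ c i := by
  classical
  have hR : ∀ c : Fin d → ℕ, (c z : ℂ) * ∏ i, lam i ^ c i
      = ∑ _j ∈ Finset.Icc 1 (c z), ∏ i, lam i ^ c i := by
    intro c
    rw [Finset.sum_const, Nat.card_Icc, nsmul_eq_mul]
    norm_num
  simp only [hR, Finset.mul_sum]
  rw [Finset.sum_sigma', Finset.sum_sigma']
  refine Finset.sum_bij'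
    (fun p _ => (⟨Function.update p.2 z (p.2 z + p.1), p.1⟩ :
      Σ _c : Fin d → ℕ, ℕ))
    (fun q _ => (⟨q.2, Function.update q.1 z (q.1 z - q.2)⟩ :
      Σ _j : ℕ, Fin d → ℕ)) ?_ ?_ ?_ ?_ ?_
  · rintro ⟨j, c'⟩ hp
    simp only [Finset.mem_sigma, Finset.mem_Icc, Finset.Nat.mem_antidiagonalTuple] at hp ⊢
    obtain ⟨⟨h1, h2⟩, h3⟩ := hp
    have h4 := sum_update_aux c' z (c' z + j)
    constructor
    · omega
    · constructor
      · exact h1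
      · simp
  · rintro ⟨c, j⟩ hq
    simp only [Finset.mem_sigma, Finset.mem_Icc, Finset.Nat.mem_antidiagonalTuple] at hq ⊢
    obtain ⟨h1, h2, h3⟩ := hq
    have hle : c z ≤ n := h1 ▸ Finset.single_le_sum (f := fun i => c i)
      (fun i _ => Nat.zero_le _) (Finset.mem_univ z)
    have h4 := sum_update_aux c z (c z - j)
    refine ⟨⟨h2, le_trans h3 hle⟩, ?_⟩
    omega
  · rintro ⟨j, c'⟩ hp
    simp only [Function.update_idem, Function.update_self, Nat.add_sub_cancel,
      Function.update_eq_self]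
  · rintro ⟨c, j⟩ hq
    simp only [Finset.mem_sigma, Finset.mem_Icc, Finset.Nat.mem_antidiagonalTuple] at hq
    simp only [Function.update_idem, Function.update_self,
      Nat.sub_add_cancel hq.2.2, Function.update_eq_self]
  · rintro ⟨j, c'⟩ hp
    rw [← Finset.mul_prod_erase Finset.univ (fun i => lam i ^ c' i)
        (Finset.mem_univ z), ← mul_assoc, ← pow_add,
      ← Finset.mul_prod_erase Finset.univ
        (fun x => lam x ^ Function.update c' z (c' z + j) x) (Finset.mem_univ z)]
    simp only [Function.update_self]
    exact congrArg₂ (· * ·) (by rw [Nat.add_comm])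
      (Finset.prod_congr rfl fun x hx => by
        rw [Function.update_of_ne (Finset.ne_of_mem_erase hx)])

lemma sum_cond_eq (F : (Fin n → Fin d) → ℂ)
    (hF : ∀ (v : Fin n → Fin d) (σ : Equiv.Perm (Fin n)), F (v ∘ σ) = F v)
    (z : Fin d) (j₀ j₁ : Fin n) :
    ∑ v : Fin n → Fin d, (if v j₀ = z then F v else 0)
      = ∑ v : Fin n → Fin d, (if v j₁ = z then F v else 0) := by
  classical
  have h : ∀ v : Fin n → Fin d,
      (if v j₀ = z then F v else 0)
        = (if (v ∘ Equiv.swap j₀ j₁) j₁ = z then F (v ∘ Equiv.swap j₀ j₁) else 0) := by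
    intro v
    rw [hF v (Equiv.swap j₀ j₁)]
    simp [Equiv.swap_apply_right]
  rw [Finset.sum_congr rfl fun v _ => h v]
  exact Fintype.sum_bijective (fun v : Fin n → Fin d => v ∘ Equiv.swap j₀ j₁)
    ((Equiv.arrowCongr (Equiv.swap j₀ j₁).symm (Equiv.refl (Fin d))).bijective.comp
      Function.bijective_id |>.comp Function.bijective_id |> fun _ => by
        exact (Equiv.arrowCongr (Equiv.swap j₀ j₁) (Equiv.refl (Fin d))).symm.bijective)
    _ _ (fun v => rfl)

lemma symmetrize (z : Fin d) (j₀ : Fin n) :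
    (n : ℂ) * ∑ v : Fin n → Fin d, (if v j₀ = z then (S v : ℂ) * ∏ j, lam (v j) else 0)
      = ∑ v : Fin n → Fin d, (cnt v z : ℂ) * ((S v : ℂ) * ∏ j, lam (v j)) := by
  classical
  set F : (Fin n → Fin d) → ℂ := fun v => (S v : ℂ) * ∏ j, lam (v j) with hF
  have hFinv : ∀ (v : Fin n → Fin d) (σ : Equiv.Perm (Fin n)), F (v ∘ σ) = F v := by
    intro v σ
    simp only [hF, S_comp']
    congr 1
    simpa using Equiv.prod_comp σ fun j => lam (v j)
  have hcnt : ∀ v : Fin n → Fin d,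
      ((cnt v z : ℕ) : ℂ) = ∑ j : Fin n, (if v j = z then (1:ℂ) else 0) := by
    intro v
    rw [Finset.sum_boole, cnt]
  have expand : ∑ v : Fin n → Fin d, (cnt v z : ℂ) * F v
      = ∑ j : Fin n, ∑ v : Fin n → Fin d, (if v j = z then F v else 0) := by
    rw [Finset.sum_comm]
    refine Finset.sum_congr rfl fun v _ => ?_
    rw [hcnt v, Finset.sum_mul]
    exact Finset.sum_congr rfl fun j _ => by rw [ite_mul, one_mul, zero_mul]
  rw [expand, Finset.sum_congr rfl fun j _ => sum_cond_eq F hFinv z j j₀,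
    Finset.sum_const, Finset.card_univ, Fintype.card_fin, nsmul_eq_mul]

end Stmt4Aux

open Stmt4Aux

/-- Lemma S1, part 2. For `d ≥ 1`, `n = m+1 ≥ 1` and a diagonal
matrix `Λ = diagonal lam` with `(0,0)` entry `λ₀ = lam 0`,
`⟨e₀| tr_{2…n}[Π_n Λ^{⊗n} Π_n] |e₀⟩ = (1/n) ∑_{j=1}^{n} λ₀^j · p_{n−j}`,
where `p_k = tr[Π_k Λ^{⊗k}]` for `k ≥ 1` and `p₀ = 1`. -/
theorem stmt4 (d m : ℕ) (hd : 1 ≤ d) (lam : Fin d → ℂ) :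
    ptrRest (symProj (m + 1) d * tpow (Matrix.diagonal lam) (m + 1) * symProj (m + 1) d)
        (⟨0, hd⟩ : Fin d) (⟨0, hd⟩ : Fin d)
      = ((m + 1 : ℕ) : ℂ)⁻¹ * ∑ j ∈ Finset.Icc 1 (m + 1),
          (lam (⟨0, hd⟩ : Fin d)) ^ j *
            (if m + 1 - j = 0 then 1
             else (symProj (m + 1 - j) d * tpow (Matrix.diagonal lam) (m + 1 - j)).trace) := by
  classical
  set z : Fin d := ⟨0, hd⟩ with hz
  have hfac : (((m+1).factorial : ℕ) : ℂ) ≠ 0 := by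
    exact_mod_cast Nat.factorial_ne_zero _
  have hn : ((m + 1 : ℕ) : ℂ) ≠ 0 := by exact_mod_cast Nat.succ_ne_zero m
  have hbridge : ∀ j ∈ Finset.Icc 1 (m+1),
      lam z ^ j * (if m + 1 - j = 0 then 1
          else (symProj (m + 1 - j) d * tpow (Matrix.diagonal lam) (m + 1 - j)).trace)
        = lam z ^ j * ∑ c ∈ Finset.Nat.antidiagonalTuple d (m + 1 - j), ∏ i, lam i ^ c i := by
    intro j hj
    congr 1
    split
    · next h =>
        rw [h, Finset.Nat.antidiagonalTuple_zero_right, Finset.sum_singleton]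
        simp
    · exact trace_eq lam
  rw [Finset.sum_congr rfl hbridge, final_bij (m+1) lam z]
  rw [ptrRest, Matrix.of_apply]
  rw [Finset.sum_congr rfl fun t _ => entry lam ((Fin.cons z t : Fin (m+1) → Fin d)), ← Finset.mul_sum]
  have hA : (∑ t : Fin m → Fin d, ((S ((Fin.cons z t : Fin (m+1) → Fin d)) : ℂ) * ∏ j, lam ((Fin.cons z t : Fin (m+1) → Fin d) j)))
      = ∑ v : Fin (m+1) → Fin d, (if v 0 = z then (S v : ℂ) * ∏ j, lam (v j) else 0) := by
    rw [← Equiv.sum_comp (Fin.consEquiv fun _ : Fin (m+1) => Fin d)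
        (fun v => if v 0 = z then (S v : ℂ) * ∏ j, lam (v j) else 0),
      Fintype.sum_prod_type]
    simp only [Fin.consEquiv, Equiv.coe_fn_mk, Fin.cons_zero]
    rw [Finset.sum_congr rfl (fun x (_ : x ∈ Finset.univ) => by
        split <;> simp :
        ∀ x ∈ Finset.univ, (∑ t : Fin m → Fin d, if x = z then
            (S ((Fin.cons x t : Fin (m+1) → Fin d)) : ℂ) * ∏ j, lam ((Fin.cons x t : Fin (m+1) → Fin d) j) else 0)
          = if x = z then
              (∑ t : Fin m → Fin d, (S ((Fin.cons x t : Fin (m+1) → Fin d)) : ℂ) * ∏ j, lam ((Fin.cons x t : Fin (m+1) → Fin d) j))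
            else 0),
      Finset.sum_ite_eq' Finset.univ z, if_pos (Finset.mem_univ z)]
  rw [hA]
  have hsym := symmetrize (n := m+1) lam z 0
  have h2 : (∑ v : Fin (m+1) → Fin d, (if v 0 = z then (S v : ℂ) * ∏ j, lam (v j) else 0))
      = ((m + 1 : ℕ) : ℂ)⁻¹ *
          ∑ v : Fin (m+1) → Fin d, (cnt v z : ℂ) * ((S v : ℂ) * ∏ j, lam (v j)) := by
    rw [← hsym, ← mul_assoc, inv_mul_cancel₀ hn, one_mul]
  rw [h2]
  have h3 : (∑ v : Fin (m+1) → Fin d, (cnt v z : ℂ) * ((S v : ℂ) * ∏ j, lam (v j)))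
      = ∑ v : Fin (m+1) → Fin d, (S v : ℂ) * ((cnt v z : ℂ) * ∏ i, lam i ^ cnt v i) := by
    refine Finset.sum_congr rfl fun v _ => ?_
    rw [prod_lam lam v]
    ring
  rw [h3, key (fun c => (c z : ℂ) * ∏ i, lam i ^ c i)]
  field_simp
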